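/- Let α > 0, let s ∈ ℂ with s² = −1 (i.e. s = i or s = −i), and define β(z) = ((z−α)/(z+α))^{1/4} using the principal branch of the complex power, and the 2×2 matrix function Ψ(z) = (1/2)·[[β(z)+β(z)⁻¹, −i s (β(z)−β(z)⁻¹)],[−i s (β(z)−β(z)⁻¹), β(z)+β(z)⁻¹]]. Then: (i) Ψ is analytic on ℂ∖[−α,α]; (ii) Ψ(z) → I as z → ∞; and (iii) for every x ∈ (−α,α), the boundary values Ψ₊(x) = lim_{ε→0⁺} Ψ(x+iε) and Ψ₋(x) = lim_{ε→0⁺} Ψ(x−iε) exist and satisfy Ψ₊(x) = Ψ₋(x)·[[0, s],[s, 0]]. That is, Ψ solves the Riemann–Hilbert problem with constant off-diagonal jump [[0,s],[s,0]] on [−α,α] and identity behaviour at infinity. -/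

import Mathlib

open Complex Filter Topology

/-- `β(z) = ((z−α)/(z+α))^{1/4}`, principal branch of the complex power. -/
noncomputable def betaHM (α : ℝ) (z : ℂ) : ℂ :=
  ((z - (α : ℂ)) / (z + (α : ℂ))) ^ ((1 : ℂ) / 4)

/-- The outer parametrix
`Ψ(z) = (1/2)·[[β+β⁻¹, −is(β−β⁻¹)],[−is(β−β⁻¹), β+β⁻¹]]` for the Hastings–McLeod
Riemann–Hilbert problem. -/
noncomputable def PsiHMout (α : ℝ) (s : ℂ) (z : ℂ) : Matrix (Fin 2) (Fin 2) ℂ :=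
  ((1 : ℂ) / 2) •
    !![betaHM α z + (betaHM α z)⁻¹, -Complex.I * s * (betaHM α z - (betaHM α z)⁻¹);
       -Complex.I * s * (betaHM α z - (betaHM α z)⁻¹), betaHM α z + (betaHM α z)⁻¹]

private lemma tendsto_matrix2 {γ : Type*} {l : Filter γ} {f : γ → Matrix (Fin 2) (Fin 2) ℂ}
    {A : Matrix (Fin 2) (Fin 2) ℂ}
    (h : ∀ i j, Tendsto (fun x => f x i j) l (𝓝 (A i j))) : Tendsto f l (𝓝 A) :=
  tendsto_pi_nhds.2 fun i => tendsto_pi_nhds.2 fun j => h i j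

private lemma psiEntry_tendsto {γ : Type*} {l : Filter γ} {f : γ → ℂ} {b : ℂ} (hb : b ≠ 0)
    (s : ℂ) (hf : Tendsto f l (𝓝 b)) :
    Tendsto (fun x => ((1:ℂ)/2) •
      !![f x + (f x)⁻¹, -Complex.I * s * (f x - (f x)⁻¹);
         -Complex.I * s * (f x - (f x)⁻¹), f x + (f x)⁻¹]) l
      (𝓝 (((1:ℂ)/2) •
      !![b + b⁻¹, -Complex.I * s * (b - b⁻¹);
         -Complex.I * s * (b - b⁻¹), b + b⁻¹])) := by
  have hinv : Tendsto (fun x => (f x)⁻¹) l (𝓝 b⁻¹) := hf.inv₀ hb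
  apply tendsto_matrix2
  intro i j
  fin_cases i <;> fin_cases j <;>
    simp only [Matrix.smul_apply, Matrix.cons_val', Matrix.cons_val_zero, Matrix.cons_val_one,
      Matrix.head_cons, Matrix.head_fin_const, Matrix.empty_val', Matrix.cons_val_fin_one,
      smul_eq_mul] <;>
    first
    | exact tendsto_const_nhds.mul (hf.add hinv)
    | exact tendsto_const_nhds.mul (tendsto_const_nhds.mul (hf.sub hinv))

private lemma wSlit (α : ℝ) (hα : 0 < α) {z : ℂ}
    (hz : z ∉ (fun t : ℝ => (t : ℂ)) '' Set.Icc (-α) α) :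
    (z + (α : ℂ)) ≠ 0 ∧ (z - (α : ℂ)) / (z + (α : ℂ)) ≠ 0 ∧
      (z - (α : ℂ)) / (z + (α : ℂ)) ∈ slitPlane := by
  have hden : z + (α : ℂ) ≠ 0 := fun h =>
    hz ⟨-α, ⟨le_refl _, by linarith⟩, by push_cast; linear_combination -h⟩
  have hnum : z - (α : ℂ) ≠ 0 := fun h =>
    hz ⟨α, ⟨by linarith, le_refl _⟩, by linear_combination -h⟩
  refine ⟨hden, div_ne_zero hnum hden, ?_⟩
  by_contra hw
  simp only [Complex.mem_slitPlane_iff, not_or, not_lt, not_ne_iff] at hw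
  obtain ⟨hre, him⟩ := hw
  set w := (z - (α : ℂ)) / (z + (α : ℂ)) with hwdef
  set t : ℝ := w.re with ht
  have hwt : w = (t : ℂ) := Complex.ext rfl (by simpa using him)
  have ht0 : t ≤ 0 := hre
  have h1t : (0:ℝ) < 1 - t := by linarith
  have hzeq : z * (1 - (t:ℂ)) = (α:ℂ) * (1 + t) := by
    have h2 : z - (α : ℂ) = (t : ℂ) * (z + (α : ℂ)) := by
      rw [hwdef, div_eq_iff hden] at hwt
      linear_combination hwt
    linear_combination h2
  have hz' : z = ((α * (1 + t) / (1 - t) : ℝ) : ℂ) := by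
    have h1t' : ((1:ℂ) - t) ≠ 0 := by
      intro h
      have : (1:ℝ) - t = 0 := by exact_mod_cast congrArg Complex.re h
      linarith
    push_cast
    rw [eq_div_iff h1t']
    linear_combination hzeq
  exact hz ⟨α * (1 + t) / (1 - t),
    ⟨by rw [le_div_iff₀ h1t]; nlinarith, by rw [div_le_iff₀ h1t]; nlinarith⟩, hz'.symm⟩

/-- **The outer parametrix solves the Riemann–Hilbert problem with constant
off-diagonal jump `[[0,s],[s,0]]` on `[−α,α]` and identity at infinity:**
for `α > 0` and `s² = −1`, (i) `Ψ` is analytic on `ℂ∖[−α,α]`; (ii) `Ψ(z) → I` as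
`z → ∞`; (iii) for every `x ∈ (−α,α)` the boundary values `Ψ₊(x), Ψ₋(x)` from above
and below exist and satisfy `Ψ₊(x) = Ψ₋(x)·[[0,s],[s,0]]`. -/
theorem PsiHMout_RHP (α : ℝ) (hα : 0 < α) (s : ℂ) (hs : s ^ 2 = -1) :
    (∀ p q : Fin 2, AnalyticOnNhd ℂ (fun z => PsiHMout α s z p q)
      ((fun t : ℝ => (t : ℂ)) '' Set.Icc (-α) α)ᶜ) ∧
    Tendsto (PsiHMout α s) (Bornology.cobounded ℂ) (nhds 1) ∧
    (∀ x ∈ Set.Ioo (-α) α, ∃ Pp Pm : Matrix (Fin 2) (Fin 2) ℂ,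
      Tendsto (fun ε : ℝ => PsiHMout α s ((x : ℂ) + ε * Complex.I))
        (nhdsWithin 0 (Set.Ioi 0)) (nhds Pp) ∧
      Tendsto (fun ε : ℝ => PsiHMout α s ((x : ℂ) - ε * Complex.I))
        (nhdsWithin 0 (Set.Ioi 0)) (nhds Pm) ∧
      Pp = Pm * !![0, s; s, 0]) := by
  refine ⟨?_, ?_, ?_⟩
  · -- (i) analyticity
    intro p q z hz
    obtain ⟨hden, hwne, hslit⟩ := wSlit α hα hz
    have hwa : AnalyticAt ℂ (fun z : ℂ => (z - (α:ℂ))/(z + (α:ℂ))) z :=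
      (analyticAt_id.sub analyticAt_const).div (analyticAt_id.add analyticAt_const) hden
    have hβ : AnalyticAt ℂ (betaHM α) z := hwa.cpow analyticAt_const hslit
    have hβne : betaHM α z ≠ 0 := by
      simp only [betaHM, ne_eq, cpow_eq_zero_iff, not_and_or]
      exact Or.inl hwne
    have hβi : AnalyticAt ℂ (fun z => (betaHM α z)⁻¹) z := hβ.inv hβne
    fin_cases p <;> fin_cases q <;>
      simp only [PsiHMout, Matrix.smul_apply, Matrix.cons_val', Matrix.cons_val_zero,
        Matrix.cons_val_one, Matrix.head_cons, Matrix.head_fin_const, Matrix.empty_val',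
        Matrix.cons_val_fin_one, smul_eq_mul, Fin.isValue, Fin.zero_eta, Fin.mk_one] <;>
      first
      | exact analyticAt_const.mul (hβ.add hβi)
      | exact analyticAt_const.mul (analyticAt_const.mul (hβ.sub hβi))
  · -- (ii) identity at infinity
    have hadd : Tendsto (fun z : ℂ => z + (α:ℂ)) (Bornology.cobounded ℂ)
        (Bornology.cobounded ℂ) := by
      rw [← tendsto_norm_atTop_iff_cobounded]
      apply tendsto_atTop_mono (fun z => ?_)
        (tendsto_atTop_add_const_right _ (-‖(α:ℂ)‖) tendsto_norm_cobounded_atTop)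
      have := norm_sub_norm_le z (-(α:ℂ))
      simp only [norm_neg, sub_neg_eq_add] at this
      linarith
    have hinv : Tendsto (fun z : ℂ => (z + (α:ℂ))⁻¹) (Bornology.cobounded ℂ) (𝓝 0) :=
      tendsto_inv₀_cobounded.comp hadd
    have hW : Tendsto (fun z : ℂ => (z - (α:ℂ))/(z + (α:ℂ))) (Bornology.cobounded ℂ) (𝓝 1) := by
      have h0 : Tendsto (fun z : ℂ => (1:ℂ) - (2*(α:ℂ)) * (z+(α:ℂ))⁻¹) (Bornology.cobounded ℂ)
          (𝓝 (1 - (2*(α:ℂ)) * 0)) := (tendsto_const_nhds (x := (1:ℂ))).sub (hinv.const_mul _)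
      rw [mul_zero, sub_zero] at h0
      refine h0.congr' ?_
      filter_upwards [hadd.eventually (Bornology.eventually_ne_cobounded 0)] with z hz
      field_simp
      ring
    have hbeta : Tendsto (betaHM α) (Bornology.cobounded ℂ) (𝓝 1) := by
      have hc : ContinuousAt (fun w : ℂ => w ^ ((1:ℂ)/4)) 1 :=
        continuousAt_cpow_const (by simp [Complex.mem_slitPlane_iff])
      have h2 : Tendsto (fun z : ℂ => ((z - (α:ℂ))/(z + (α:ℂ))) ^ ((1:ℂ)/4))
          (Bornology.cobounded ℂ) (𝓝 ((1:ℂ) ^ ((1:ℂ)/4))) := hc.tendsto.comp hW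
      rw [Complex.one_cpow] at h2
      exact h2
    have h1 : (((1:ℂ)/2) •
        !![(1:ℂ) + 1⁻¹, -Complex.I * s * ((1:ℂ) - 1⁻¹);
           -Complex.I * s * ((1:ℂ) - 1⁻¹), (1:ℂ) + 1⁻¹]) = (1 : Matrix (Fin 2) (Fin 2) ℂ) := by
      ext i j
      fin_cases i <;> fin_cases j <;>
        simp [Matrix.one_apply] <;> norm_num
    have := psiEntry_tendsto one_ne_zero s hbeta
    rw [h1] at this
    exact this
  · -- (iii) boundary values and jump
    intro x hx
    obtain ⟨hx1, hx2⟩ := hx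
    have hvne : ((x:ℂ) + (α:ℂ)) ≠ 0 := by
      intro h
      have : x + α = 0 := by simpa using congrArg Complex.re h
      linarith
    set w₀ : ℂ := ((x:ℂ) - (α:ℂ)) / ((x:ℂ) + (α:ℂ)) with hw₀
    have hw₀cast : w₀ = (((x - α)/(x + α) : ℝ) : ℂ) := by rw [hw₀]; push_cast; ring
    have hw₀re : w₀.re < 0 := by
      rw [hw₀cast, Complex.ofReal_re]
      exact div_neg_of_neg_of_pos (by linarith) (by linarith)
    have hw₀im : w₀.im = 0 := by rw [hw₀cast, Complex.ofReal_im]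
    -- common facts
    have hDne : ∀ ε : ℝ, (((x:ℂ) + ε*I) + α) ≠ 0 := by
      intro ε h
      have : x + α = 0 := by simpa using congrArg Complex.re h
      linarith
    have hDne' : ∀ ε : ℝ, (((x:ℂ) - ε*I) + α) ≠ 0 := by
      intro ε h
      have : x + α = 0 := by simpa using congrArg Complex.re h
      linarith
    set wp : ℝ → ℂ := fun ε => (((x:ℂ) + ε*I) - α)/(((x:ℂ) + ε*I) + α) with hwp_def
    set wm : ℝ → ℂ := fun ε => (((x:ℂ) - ε*I) - α)/(((x:ℂ) - ε*I) + α) with hwm_def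
    have himp : ∀ ε : ℝ, 0 < ε → 0 < (wp ε).im := by
      intro ε hε
      have hnsq : 0 < Complex.normSq (((x:ℂ)+ε*I) + α) := Complex.normSq_pos.2 (hDne ε)
      have him : (wp ε).im = ε * (2*α) / Complex.normSq (((x:ℂ)+ε*I) + α) := by
        simp [hwp_def, Complex.div_im]
        ring
      rw [him]; positivity
    have himm : ∀ ε : ℝ, 0 < ε → (wm ε).im < 0 := by
      intro ε hε
      have hnsq : 0 < Complex.normSq (((x:ℂ)-ε*I) + α) := Complex.normSq_pos.2 (hDne' ε)
      have him : (wm ε).im = -(ε * (2*α)) / Complex.normSq (((x:ℂ)-ε*I) + α) := by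
        simp [hwm_def, Complex.div_im]
        ring
      rw [him]
      exact div_neg_of_neg_of_pos (by nlinarith) hnsq
    have hwpne : ∀ ε : ℝ, 0 < ε → wp ε ≠ 0 := fun ε hε h => by
      have := himp ε hε; rw [h] at this; simp at this
    have hwmne : ∀ ε : ℝ, 0 < ε → wm ε ≠ 0 := fun ε hε h => by
      have := himm ε hε; rw [h] at this; simp at this
    have hwp_t : Tendsto wp (𝓝[>] (0:ℝ)) (𝓝 w₀) := by
      apply Tendsto.mono_left _ nhdsWithin_le_nhds
      have hnum : Continuous (fun ε : ℝ => ((x:ℂ)+ε*I) - α) := by fun_prop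
      have hden : Continuous (fun ε : ℝ => ((x:ℂ)+ε*I) + α) := by fun_prop
      have := (hnum.tendsto 0).div (hden.tendsto 0) (by simpa using hvne)
      simp only [ofReal_zero, zero_mul, add_zero, sub_zero] at this; exact this
    have hwm_t : Tendsto wm (𝓝[>] (0:ℝ)) (𝓝 w₀) := by
      apply Tendsto.mono_left _ nhdsWithin_le_nhds
      have hnum : Continuous (fun ε : ℝ => ((x:ℂ)-ε*I) - α) := by fun_prop
      have hden : Continuous (fun ε : ℝ => ((x:ℂ)-ε*I) + α) := by fun_prop
      have := (hnum.tendsto 0).div (hden.tendsto 0) (by simpa using hvne)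
      simp only [ofReal_zero, zero_mul, add_zero, sub_zero] at this; exact this
    set L : ℂ := (Real.log ‖w₀‖ : ℂ) with hL
    set b : ℂ := Complex.exp ((L - ↑Real.pi * I) * (1/4)) with hb_def
    set bp : ℂ := Complex.exp ((L + ↑Real.pi * I) * (1/4)) with hbp_def
    have hlogp : Tendsto (fun ε => Complex.log (wp ε)) (𝓝[>] (0:ℝ)) (𝓝 (L + ↑Real.pi * I)) := by
      apply (Complex.tendsto_log_nhdsWithin_im_nonneg_of_re_neg_of_im_zero hw₀re hw₀im).comp
      rw [tendsto_nhdsWithin_iff]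
      refine ⟨hwp_t, ?_⟩
      filter_upwards [self_mem_nhdsWithin] with ε hε
      exact le_of_lt (himp ε hε)
    have hlogm : Tendsto (fun ε => Complex.log (wm ε)) (𝓝[>] (0:ℝ)) (𝓝 (L - ↑Real.pi * I)) := by
      apply (Complex.tendsto_log_nhdsWithin_im_neg_of_re_neg_of_im_zero hw₀re hw₀im).comp
      rw [tendsto_nhdsWithin_iff]
      exact ⟨hwm_t, by filter_upwards [self_mem_nhdsWithin] with ε hε using himm ε hε⟩
    have hbp_t : Tendsto (fun ε : ℝ => betaHM α ((x:ℂ) + ε*I)) (𝓝[>] (0:ℝ)) (𝓝 bp) := by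
      have h1 : Tendsto (fun ε : ℝ => Complex.exp (Complex.log (wp ε) * (1/4)))
          (𝓝[>] (0:ℝ)) (𝓝 bp) := by
        rw [hbp_def]
        exact (Complex.continuous_exp.tendsto _).comp (hlogp.mul_const _)
      refine h1.congr' ?_
      filter_upwards [self_mem_nhdsWithin] with ε hε
      rw [betaHM]
      exact (Complex.cpow_def_of_ne_zero (hwpne ε hε) _).symm
    have hbm_t : Tendsto (fun ε : ℝ => betaHM α ((x:ℂ) - ε*I)) (𝓝[>] (0:ℝ)) (𝓝 b) := by
      have h1 : Tendsto (fun ε : ℝ => Complex.exp (Complex.log (wm ε) * (1/4)))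
          (𝓝[>] (0:ℝ)) (𝓝 b) := by
        rw [hb_def]
        exact (Complex.continuous_exp.tendsto _).comp (hlogm.mul_const _)
      refine h1.congr' ?_
      filter_upwards [self_mem_nhdsWithin] with ε hε
      rw [betaHM]
      exact (Complex.cpow_def_of_ne_zero (hwmne ε hε) _).symm
    have hbne : b ≠ 0 := Complex.exp_ne_zero _
    have hIb : bp = Complex.I * b := by
      rw [hbp_def, hb_def, show ((L + ↑Real.pi * I) * (1/4)) =
        ((L - ↑Real.pi * I) * (1/4)) + (↑(Real.pi/2) * I) by push_cast; ring,
        Complex.exp_add]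
      rw [show Complex.exp (↑(Real.pi/2) * I) = Complex.I by
        rw [Complex.exp_mul_I, ← Complex.ofReal_cos, ← Complex.ofReal_sin,
          Real.cos_pi_div_two, Real.sin_pi_div_two]; simp]
      ring
    rw [hIb] at hbp_t
    have hIbne : Complex.I * b ≠ 0 := mul_ne_zero Complex.I_ne_zero hbne
    refine ⟨_, _, psiEntry_tendsto hIbne s hbp_t, psiEntry_tendsto hbne s hbm_t, ?_⟩
    ext i j
    fin_cases i <;> fin_cases j <;>
      simp [Matrix.mul_apply, Fin.sum_univ_two, Complex.inv_I, mul_inv_rev] <;>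
      first
      | linear_combination (Complex.I * (b - b⁻¹)/2) * hs
      | linear_combination (Complex.I * (b⁻¹ - b)/2) * hs
      | linear_combination (-(s*(b+b⁻¹))/2) * Complex.I_sq
      | linear_combination ((s*(b+b⁻¹))/2) * Complex.I_sq
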